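/- Redistribution corollary: for any justified mechanism M = (φ, τ), there exists a justified mechanism M' = (φ, τ') with the same option rule such that (i) τ'_i(v) ≥ τ_i(v) for all i and v; (ii) B(v; M') ≤ max{0, B(v; M)} for all v; and (iii) for every agent i and every v_{-i}, max_{v_i ∈ V_i} B((v_i, v_{-i}); M') ≥ 0. -/

import Mathlib

/-- Social efficiency of an option rule. -/
def SocEff {N X : Type*} [Fintype N] (V : N → Finset (X → ℝ))
    (φ : (N → (X → ℝ)) → X) : Prop :=
  ∀ v : N → (X → ℝ), (∀ i, v i ∈ V i) → ∀ x : X, ∑ i, v i x ≤ ∑ i, v i (φ v)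

/-- Dominant-strategy incentive compatibility. -/
def DSIC {N X : Type*} [Fintype N] [DecidableEq N] (V : N → Finset (X → ℝ))
    (φ : (N → (X → ℝ)) → X) (τ : N → (N → (X → ℝ)) → ℝ) : Prop :=
  ∀ v : N → (X → ℝ), (∀ j, v j ∈ V j) → ∀ i : N, ∀ vi' ∈ V i,
    v i (φ (Function.update v i vi')) + τ i (Function.update v i vi')
      ≤ v i (φ v) + τ i v

/-- Individual rationality. -/
def IR {N X : Type*} [Fintype N] (V : N → Finset (X → ℝ))
    (φ : (N → (X → ℝ)) → X) (τ : N → (N → (X → ℝ)) → ℝ) : Prop :=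
  ∀ v : N → (X → ℝ), (∀ j, v j ∈ V j) → ∀ i : N, 0 ≤ v i (φ v) + τ i v

/-- A justified mechanism satisfies SE, DSIC, and IR. -/
def Justified {N X : Type*} [Fintype N] [DecidableEq N] (V : N → Finset (X → ℝ))
    (φ : (N → (X → ℝ)) → X) (τ : N → (N → (X → ℝ)) → ℝ) : Prop :=
  SocEff V φ ∧ DSIC V φ τ ∧ IR V φ τ

section RedistAux

variable {N X : Type*} [Fintype N] [DecidableEq N]

/-- The rebate added to agent `t`'s payment. -/
noncomputable def rfun (V : N → Finset (X → ℝ)) (hVne : ∀ i, (V i).Nonempty)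
    (t : N) (τ : N → (N → (X → ℝ)) → ℝ) (v : N → (X → ℝ)) : ℝ :=
  max 0 (-(V t).sup' (hVne t) (fun vi => ∑ j, τ j (Function.update v t vi)))

/-- One step of the redistribution construction. -/
noncomputable def stepτ (V : N → Finset (X → ℝ)) (hVne : ∀ i, (V i).Nonempty)
    (t : N) (τ : N → (N → (X → ℝ)) → ℝ) : N → (N → (X → ℝ)) → ℝ :=
  fun j v => τ j v + (if j = t then rfun V hVne t τ v else 0)

/-- Iterating the construction over a list of agents. -/
noncomputable def iterτ (V : N → Finset (X → ℝ)) (hVne : ∀ i, (V i).Nonempty) :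
    List N → (N → (N → (X → ℝ)) → ℝ) → (N → (N → (X → ℝ)) → ℝ)
  | [], τ => τ
  | t :: l, τ => iterτ V hVne l (stepτ V hVne t τ)

lemma r_nonneg (V : N → Finset (X → ℝ)) (hVne : ∀ i, (V i).Nonempty)
    (t : N) (τ : N → (N → (X → ℝ)) → ℝ) (v : N → (X → ℝ)) :
    0 ≤ rfun V hVne t τ v := le_max_left _ _

lemma r_update (V : N → Finset (X → ℝ)) (hVne : ∀ i, (V i).Nonempty)
    (t : N) (τ : N → (N → (X → ℝ)) → ℝ) (v : N → (X → ℝ)) (vi' : X → ℝ) :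
    rfun V hVne t τ (Function.update v t vi') = rfun V hVne t τ v := by
  simp [rfun, Function.update_idem]

lemma le_step (V : N → Finset (X → ℝ)) (hVne : ∀ i, (V i).Nonempty)
    (t : N) (τ : N → (N → (X → ℝ)) → ℝ) (j : N) (v : N → (X → ℝ)) :
    τ j v ≤ stepτ V hVne t τ j v := by
  have : (0:ℝ) ≤ (if j = t then rfun V hVne t τ v else 0) := by
    split_ifs
    · exact r_nonneg V hVne t τ v
    · exact le_refl 0
  simp only [stepτ]; linarith

lemma le_iter (V : N → Finset (X → ℝ)) (hVne : ∀ i, (V i).Nonempty) :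
    ∀ (l : List N) (τ : N → (N → (X → ℝ)) → ℝ) (j : N) (v : N → (X → ℝ)),
      τ j v ≤ iterτ V hVne l τ j v
  | [], τ, j, v => le_rfl
  | t :: l, τ, j, v =>
    le_trans (le_step V hVne t τ j v) (le_iter V hVne l (stepτ V hVne t τ) j v)

lemma sum_step (V : N → Finset (X → ℝ)) (hVne : ∀ i, (V i).Nonempty)
    (t : N) (τ : N → (N → (X → ℝ)) → ℝ) (v : N → (X → ℝ)) :
    ∑ j, stepτ V hVne t τ j v = (∑ j, τ j v) + rfun V hVne t τ v := by
  simp [stepτ, Finset.sum_add_distrib, Finset.sum_ite_eq']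

lemma justified_step (V : N → Finset (X → ℝ)) (hVne : ∀ i, (V i).Nonempty)
    (φ : (N → (X → ℝ)) → X) (t : N) (τ : N → (N → (X → ℝ)) → ℝ)
    (hJ : Justified V φ τ) : Justified V φ (stepτ V hVne t τ) := by
  obtain ⟨hSE, hD, hIR⟩ := hJ
  refine ⟨hSE, ?_, ?_⟩
  · intro v hv i vi' hvi'
    have key : (if i = t then rfun V hVne t τ (Function.update v i vi') else 0)
        = (if i = t then rfun V hVne t τ v else 0) := by
      split_ifs with h
      · subst h; exact r_update V hVne i τ v vi'
      · rfl
    have := hD v hv i vi' hvi'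
    simp only [stepτ, key]
    linarith
  · intro v hv i
    have := hIR v hv i
    have h2 := le_step V hVne t τ i v
    linarith

lemma justified_iter (V : N → Finset (X → ℝ)) (hVne : ∀ i, (V i).Nonempty)
    (φ : (N → (X → ℝ)) → X) :
    ∀ (l : List N) (τ : N → (N → (X → ℝ)) → ℝ),
      Justified V φ τ → Justified V φ (iterτ V hVne l τ)
  | [], τ, hJ => hJ
  | t :: l, τ, hJ =>
    justified_iter V hVne φ l (stepτ V hVne t τ) (justified_step V hVne φ t τ hJ)

lemma sum_step_le (V : N → Finset (X → ℝ)) (hVne : ∀ i, (V i).Nonempty)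
    (t : N) (τ : N → (N → (X → ℝ)) → ℝ) (v : N → (X → ℝ)) (hv : ∀ j, v j ∈ V j) :
    ∑ j, stepτ V hVne t τ j v ≤ max 0 (∑ j, τ j v) := by
  set s := (V t).sup' (hVne t) (fun vi => ∑ j, τ j (Function.update v t vi)) with hs
  have hle : (∑ j, τ j v) ≤ s := by
    have := Finset.le_sup' (fun vi => ∑ j, τ j (Function.update v t vi)) (hv t)
    simpa only [Function.update_eq_self] using this
  rw [sum_step]
  rcases le_or_gt 0 s with h | h
  · have : rfun V hVne t τ v = 0 := by
      simp only [rfun, ← hs]; exact max_eq_left (by linarith)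
    rw [this]
    simpa using le_max_right 0 (∑ j, τ j v)
  · have : rfun V hVne t τ v = -s := by
      simp only [rfun, ← hs]; exact max_eq_right (by linarith)
    rw [this]
    have : (∑ j, τ j v) + -s ≤ 0 := by linarith
    exact le_trans this (le_max_left _ _)

lemma sum_iter_le (V : N → Finset (X → ℝ)) (hVne : ∀ i, (V i).Nonempty) :
    ∀ (l : List N) (τ : N → (N → (X → ℝ)) → ℝ) (v : N → (X → ℝ)),
      (∀ j, v j ∈ V j) → ∑ j, iterτ V hVne l τ j v ≤ max 0 (∑ j, τ j v)
  | [], τ, v, hv => le_max_right _ _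
  | t :: l, τ, v, hv => by
    have h1 := sum_iter_le V hVne l (stepτ V hVne t τ) v hv
    have h2 := sum_step_le V hVne t τ v hv
    calc ∑ j, iterτ V hVne (t :: l) τ j v
        ≤ max 0 (∑ j, stepτ V hVne t τ j v) := h1
      _ ≤ max 0 (max 0 (∑ j, τ j v)) := max_le_max le_rfl h2
      _ = max 0 (∑ j, τ j v) := by rw [← max_assoc, max_self]

lemma exists_step (V : N → Finset (X → ℝ)) (hVne : ∀ i, (V i).Nonempty)
    (t : N) (τ : N → (N → (X → ℝ)) → ℝ) (v : N → (X → ℝ)) :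
    ∃ vi ∈ V t, 0 ≤ ∑ j, stepτ V hVne t τ j (Function.update v t vi) := by
  obtain ⟨vi, hvi, hvi2⟩ := Finset.exists_mem_eq_sup' (hVne t)
    (fun vi => ∑ j, τ j (Function.update v t vi))
  refine ⟨vi, hvi, ?_⟩
  set s := (V t).sup' (hVne t) (fun vi => ∑ j, τ j (Function.update v t vi)) with hs
  rw [sum_step, r_update, ← hvi2]
  have : rfun V hVne t τ v = max 0 (-s) := by simp only [rfun, ← hs]
  rw [this]
  rcases le_or_gt 0 s with h | h
  · have := le_max_left (0:ℝ) (-s); linarith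
  · have := le_max_right (0:ℝ) (-s); linarith

lemma exists_iter (V : N → Finset (X → ℝ)) (hVne : ∀ i, (V i).Nonempty) :
    ∀ (l : List N) (τ : N → (N → (X → ℝ)) → ℝ) (v : N → (X → ℝ)) (i : N), i ∈ l →
      ∃ vi ∈ V i, 0 ≤ ∑ j, iterτ V hVne l τ j (Function.update v i vi)
  | [], τ, v, i, hi => absurd hi List.not_mem_nil
  | t :: l, τ, v, i, hi => by
    rcases List.mem_cons.mp hi with h | h
    · subst h
      obtain ⟨vi, hvi, h0⟩ := exists_step V hVne i τ v
      refine ⟨vi, hvi, le_trans h0 ?_⟩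
      exact Finset.sum_le_sum (fun j _ =>
        le_iter V hVne l (stepτ V hVne i τ) j (Function.update v i vi))
    · exact exists_iter V hVne l (stepτ V hVne t τ) v i h

end RedistAux

/-- Redistribution: any justified mechanism can be modified, keeping the option
rule, into a justified mechanism that pays every agent at least as much, whose
budget is at most `max 0` of the original budget, and whose budget cannot be
made negative for all reports of any single agent. -/
theorem redistribution {N X : Type*} [Fintype N] [DecidableEq N]
    (V : N → Finset (X → ℝ)) (hVne : ∀ i, (V i).Nonempty)
    (φ : (N → (X → ℝ)) → X) (τ : N → (N → (X → ℝ)) → ℝ)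
    (hJ : Justified V φ τ) :
    ∃ τ' : N → (N → (X → ℝ)) → ℝ, Justified V φ τ' ∧
      (∀ v : N → (X → ℝ), (∀ j, v j ∈ V j) → ∀ i : N, τ i v ≤ τ' i v) ∧
      (∀ v : N → (X → ℝ), (∀ j, v j ∈ V j) →
        (∑ i, τ' i v) ≤ max 0 (∑ i, τ i v)) ∧
      (∀ v : N → (X → ℝ), (∀ j, v j ∈ V j) → ∀ i : N,
        ∃ vi ∈ V i, 0 ≤ ∑ j, τ' j (Function.update v i vi)) := by
  refine ⟨iterτ V hVne Finset.univ.toList τ, justified_iter V hVne φ _ τ hJ, ?_, ?_, ?_⟩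
  · intro v _ i
    exact le_iter V hVne _ τ i v
  · intro v hv
    exact sum_iter_le V hVne _ τ v hv
  · intro v _ i
    exact exists_iter V hVne _ τ v i (by simp)
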